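/- Consider system (1.1) with O = ℝ^n × ℝ^k and the observer (3.1) driven by ỹ = y + e, with bounded solution (x(t),y(t)) and bounded inputs u, e. Then there exist non-decreasing functions κ : ℝ₊ → ℝ₊ and R : ℝ₊ → ℝ₊ (depending only on the system data) such that the inter-jump error growth estimate |x(t) − z(t)| ≤ [ |x(τ_i) − z(τ_i)| + r‖e‖ R(s) ] exp(rκ(s)) holds for all t ∈ (τ_i, τ_{i+1}), where s := ‖y‖ + ‖e‖ + ‖u‖ + ‖x‖ with ‖y‖ = sup_{t≥0}|y(t)|, ‖x‖ = sup_{t≥0}|x(t)|, ‖u‖ = sup_{t≥0}|u(t)|, ‖e‖ = sup_{t≥0}|e(t)| all finite. -/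

import Mathlib

open MeasureTheory Matrix Set intervalIntegral Filter

noncomputable section

/-- `g` is locally Lipschitz on the set `s`. -/
def LocLipOn {α β : Type*} [PseudoMetricSpace α] [PseudoMetricSpace β]
    (s : Set α) (g : α → β) : Prop :=
  ∀ z ∈ s, ∃ K : NNReal, ∃ t ∈ nhdsWithin z s, LipschitzOnWith K g t

/-- `u ∈ L^∞([0,r]; U)` : measurable, with values in `U` and (essentially) bounded on `[0,r]`. -/
def AdmOn (m : ℕ) (r : ℝ) (U : Set (Fin m → ℝ)) (u : ℝ → (Fin m → ℝ)) : Prop :=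
  Measurable u ∧ (∀ t ∈ Icc (0:ℝ) r, u t ∈ U) ∧ ∃ M : ℝ, ∀ t ∈ Icc (0:ℝ) r, ‖u t‖ ≤ M

/-- `u ∈ L^∞_loc(ℝ₊; U)` : measurable, with values in `U` and bounded on compact subintervals of `ℝ₊`. -/
def AdmLoc (m : ℕ) (U : Set (Fin m → ℝ)) (u : ℝ → (Fin m → ℝ)) : Prop :=
  Measurable u ∧ (∀ t, 0 ≤ t → u t ∈ U) ∧ ∀ T : ℝ, ∃ M : ℝ, ∀ t ∈ Icc (0:ℝ) T, ‖u t‖ ≤ M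

/-- `u ∈ L^∞(ℝ₊; U)` : measurable, with values in `U` and bounded on `ℝ₊`. -/
def AdmBdd (m : ℕ) (U : Set (Fin m → ℝ)) (u : ℝ → (Fin m → ℝ)) : Prop :=
  Measurable u ∧ (∀ t, 0 ≤ t → u t ∈ U) ∧ ∃ M : ℝ, ∀ t, 0 ≤ t → ‖u t‖ ≤ M

/-- locally bounded on `ℝ₊`. -/
def LocBddF {E : Type*} [Norm E] (g : ℝ → E) : Prop :=
  ∀ T : ℝ, ∃ M : ℝ, ∀ t ∈ Icc (0:ℝ) T, ‖g t‖ ≤ M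

/-- the sup norm `sup_{t ≥ 0} ‖g(t)‖`. -/
def supNorm {E : Type*} [Norm E] (g : ℝ → E) : ℝ :=
  ⨆ t : (Ici (0:ℝ)), ‖g (t : ℝ)‖

/-- `(x, y)` is a (Carathéodory) solution of system (1.1) on `ℝ₊`, for the input `u` :
`ẋ = A(y,u)x + b(y,u)`, `ẏ = f(y,u) + C'(y)x`, `(x(t), y(t)) ∈ O`. -/
def IsSystemSol (n k m : ℕ) (O : Set ((Fin n → ℝ) × (Fin k → ℝ)))
    (A : (Fin k → ℝ) → (Fin m → ℝ) → Matrix (Fin n) (Fin n) ℝ)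
    (b : (Fin k → ℝ) → (Fin m → ℝ) → (Fin n → ℝ))
    (Cm : (Fin k → ℝ) → Matrix (Fin k) (Fin n) ℝ)
    (f : (Fin k → ℝ) → (Fin m → ℝ) → (Fin k → ℝ))
    (u : ℝ → (Fin m → ℝ)) (x : ℝ → (Fin n → ℝ)) (y : ℝ → (Fin k → ℝ)) : Prop :=
  ContinuousOn x (Ici (0:ℝ)) ∧ ContinuousOn y (Ici (0:ℝ)) ∧
  (∀ t, 0 ≤ t → (x t, y t) ∈ O) ∧
  (∀ t, 0 ≤ t → x t = x 0 + ∫ s in (0:ℝ)..t, (A (y s) (u s) *ᵥ x s + b (y s) (u s))) ∧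
  (∀ t, 0 ≤ t → y t = y 0 + ∫ s in (0:ℝ)..t, (f (y s) (u s) + Cm (y s) *ᵥ x s))

/-- `Φ` is the transition matrix of the linear time-varying system `ż = A(y(t), u(t)) z`,
i.e. `Φ̇ = A(y(t),u(t)) Φ`, `Φ(0) = I` (entrywise Carathéodory form), and `Φ(t)` is invertible. -/
def IsTransition (n k m : ℕ)
    (A : (Fin k → ℝ) → (Fin m → ℝ) → Matrix (Fin n) (Fin n) ℝ)
    (y : ℝ → (Fin k → ℝ)) (u : ℝ → (Fin m → ℝ))
    (Φ : ℝ → Matrix (Fin n) (Fin n) ℝ) : Prop :=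
  Φ 0 = 1 ∧ (∀ i j, Continuous fun t => Φ t i j) ∧ (∀ t : ℝ, IsUnit (Φ t).det) ∧
  ∀ (t : ℝ) (i j : Fin n),
    Φ t i j = (1 : Matrix (Fin n) (Fin n) ℝ) i j + ∫ s in (0:ℝ)..t, (A (y s) (u s) * Φ s) i j

/-- `q(t) = ∫₀ᵗ Φ'(s) C(s) ds ∈ ℝ^{n×k}` where `C(s) = (C'(y(s)))'`. -/
def qmat (n k : ℕ) (Cm : (Fin k → ℝ) → Matrix (Fin k) (Fin n) ℝ)
    (y : ℝ → (Fin k → ℝ)) (Φ : ℝ → Matrix (Fin n) (Fin n) ℝ) (t : ℝ) :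
    Matrix (Fin n) (Fin k) ℝ :=
  Matrix.of fun i j => ∫ s in (0:ℝ)..t, ((Φ s)ᵀ * (Cm (y s))ᵀ) i j

/-- `θ(t) = ∫₀ᵗ Φ(t) Φ⁻¹(τ) b(y(τ), u(τ)) dτ`. -/
def thetaVec (n k m : ℕ)
    (b : (Fin k → ℝ) → (Fin m → ℝ) → (Fin n → ℝ))
    (y : ℝ → (Fin k → ℝ)) (u : ℝ → (Fin m → ℝ))
    (Φ : ℝ → Matrix (Fin n) (Fin n) ℝ) (t : ℝ) : Fin n → ℝ :=
  Φ t *ᵥ ∫ τ in (0:ℝ)..t, (Φ τ)⁻¹ *ᵥ b (y τ) (u τ)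

/-- `p(t) = y(t) − y(0) − ∫₀ᵗ f(y(s),u(s)) ds − ∫₀ᵗ C'(y(s)) θ(s) ds`. -/
def pvec (n k m : ℕ)
    (b : (Fin k → ℝ) → (Fin m → ℝ) → (Fin n → ℝ))
    (Cm : (Fin k → ℝ) → Matrix (Fin k) (Fin n) ℝ)
    (f : (Fin k → ℝ) → (Fin m → ℝ) → (Fin k → ℝ))
    (y : ℝ → (Fin k → ℝ)) (u : ℝ → (Fin m → ℝ))
    (Φ : ℝ → Matrix (Fin n) (Fin n) ℝ) (t : ℝ) : Fin k → ℝ :=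
  y t - y 0 - (∫ s in (0:ℝ)..t, f (y s) (u s))
    - ∫ s in (0:ℝ)..t, Cm (y s) *ᵥ thetaVec n k m b y u Φ s

/-- `Q(r) = ∫₀ʳ q(t) q'(t) dt ∈ ℝ^{n×n}`. -/
def Qmat (n k : ℕ) (r : ℝ) (Cm : (Fin k → ℝ) → Matrix (Fin k) (Fin n) ℝ)
    (y : ℝ → (Fin k → ℝ)) (Φ : ℝ → Matrix (Fin n) (Fin n) ℝ) :
    Matrix (Fin n) (Fin n) ℝ :=
  Matrix.of fun i j => ∫ t in (0:ℝ)..r, (qmat n k Cm y Φ t * (qmat n k Cm y Φ t)ᵀ) i j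

/-- the operator `P(y,u) = Φ(r,y;u) Q⁻¹ ∫₀ʳ q(τ) p(τ) dτ + θ(r)` of (2.16). -/
def Pop (n k m : ℕ) (r : ℝ)
    (b : (Fin k → ℝ) → (Fin m → ℝ) → (Fin n → ℝ))
    (Cm : (Fin k → ℝ) → Matrix (Fin k) (Fin n) ℝ)
    (f : (Fin k → ℝ) → (Fin m → ℝ) → (Fin k → ℝ))
    (Φop : (ℝ → (Fin k → ℝ)) → (ℝ → (Fin m → ℝ)) → ℝ → Matrix (Fin n) (Fin n) ℝ)
    (y : ℝ → (Fin k → ℝ)) (u : ℝ → (Fin m → ℝ)) : Fin n → ℝ :=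
  Φop y u r *ᵥ ((Qmat n k r Cm y (Φop y u))⁻¹ *ᵥ
      ∫ τ in (0:ℝ)..r, qmat n k Cm y (Φop y u) τ *ᵥ pvec n k m b Cm f y u (Φop y u) τ)
    + thetaVec n k m b y u (Φop y u) r

/-- the input `u` strongly distinguishes the state `(x₀, y₀) ∈ O` in time `r > 0` :
`max_{t ∈ [0,r]} |y(t,x₀,y₀;u) − y(t,ξ,y₀;u)| > 0` for every `ξ ≠ x₀` with `(ξ,y₀) ∈ O`. -/
def StronglyDist (n k m : ℕ) (O : Set ((Fin n → ℝ) × (Fin k → ℝ)))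
    (Y : (Fin n → ℝ) → (Fin k → ℝ) → (ℝ → (Fin m → ℝ)) → ℝ → (Fin k → ℝ))
    (r : ℝ) (u : ℝ → (Fin m → ℝ)) (x₀ : Fin n → ℝ) (y₀ : Fin k → ℝ) : Prop :=
  ∀ ξ : Fin n → ℝ, (ξ, y₀) ∈ O → ξ ≠ x₀ →
    ∃ t ∈ Icc (0:ℝ) r, 0 < ‖Y x₀ y₀ u t - Y ξ y₀ u t‖

/-- hypothesis (H1) : system (1.1) is strongly observable in time `r > 0`. -/
def H1prop (n k m : ℕ) (O : Set ((Fin n → ℝ) × (Fin k → ℝ))) (U : Set (Fin m → ℝ))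
    (Y : (Fin n → ℝ) → (Fin k → ℝ) → (ℝ → (Fin m → ℝ)) → ℝ → (Fin k → ℝ))
    (r : ℝ) : Prop :=
  ∀ u, AdmLoc m U u → ∀ x₀ y₀, (x₀, y₀) ∈ O → StronglyDist n k m O Y r u x₀ y₀

/-- hypothesis (R2) : the operator `P` is completely continuous with respect to `y`. -/
def R2prop (n k m : ℕ) (r : ℝ) (U : Set (Fin m → ℝ))
    (P : (ℝ → (Fin k → ℝ)) → (ℝ → (Fin m → ℝ)) → (Fin n → ℝ)) : Prop :=
  ∀ (S : Set (ℝ → (Fin k → ℝ))) (V : Set (ℝ → (Fin m → ℝ))),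
    (∀ g ∈ S, Measurable g) → (∃ M : ℝ, ∀ g ∈ S, ∀ t ∈ Icc (0:ℝ) r, ‖g t‖ ≤ M) →
    (∀ v ∈ V, Measurable v ∧ ∀ t ∈ Icc (0:ℝ) r, v t ∈ U) →
    (∃ M : ℝ, ∀ v ∈ V, ∀ t ∈ Icc (0:ℝ) r, ‖v t‖ ≤ M) →
    (∃ K : ℝ, ∀ g ∈ S, ∀ v ∈ V, ‖P g v‖ ≤ K) ∧
      ∀ ε > (0:ℝ), ∃ δ > (0:ℝ), ∀ g ∈ S, ∀ g' ∈ S, ∀ v ∈ V,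
        (∀ t ∈ Icc (0:ℝ) r, ‖g t - g' t‖ < δ) → ‖P g v - P g' v‖ < ε

/-- `z` is the solution of the hybrid observer (3.1) with sampling period `r`, output signal `yt`,
input `u` and initial condition `z₀` : between the jump times `τ_i = i r` the state flows
according to `ż = A(yt, u) z + b(yt, u)` and at the jump times
`z(τ_{i+1}) = P(δ_{τ_i} yt, δ_{τ_i} u)`. -/
def IsObs (n k m : ℕ) (r : ℝ)
    (A : (Fin k → ℝ) → (Fin m → ℝ) → Matrix (Fin n) (Fin n) ℝ)
    (b : (Fin k → ℝ) → (Fin m → ℝ) → (Fin n → ℝ))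
    (P : (ℝ → (Fin k → ℝ)) → (ℝ → (Fin m → ℝ)) → (Fin n → ℝ))
    (u : ℝ → (Fin m → ℝ)) (yt : ℝ → (Fin k → ℝ))
    (z₀ : Fin n → ℝ) (z : ℝ → (Fin n → ℝ)) : Prop :=
  z 0 = z₀ ∧
  (∀ i : ℕ, ContinuousOn z (Ico ((i : ℝ) * r) (((i : ℝ) + 1) * r)) ∧
    ∀ t ∈ Ico ((i : ℝ) * r) (((i : ℝ) + 1) * r),
      z t = z ((i : ℝ) * r) +
        ∫ s in ((i : ℝ) * r)..t, (A (yt s) (u s) *ᵥ z s + b (yt s) (u s))) ∧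
  ∀ i : ℕ, z (((i : ℝ) + 1) * r) =
    P (fun s => yt ((i : ℝ) * r + s)) (fun s => u ((i : ℝ) * r + s))


/-! ### Auxiliary lemmas -/

lemma LocLipOn.continuousOn' {α β : Type*} [PseudoMetricSpace α] [PseudoMetricSpace β]
    {s : Set α} {g : α → β} (h : LocLipOn s g) : ContinuousOn g s := by
  intro z hz
  obtain ⟨K, t, ht, hlip⟩ := h z hz
  have hzt : z ∈ t := mem_of_mem_nhdsWithin hz ht
  exact ((hlip.continuousOn).continuousWithinAt hzt).mono_of_mem_nhdsWithin ht

lemma LocLipOn.lipOnCompact {α β : Type*} [PseudoMetricSpace α] [PseudoMetricSpace β]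
    {s : Set α} {g : α → β} (h : LocLipOn s g) {Kc : Set α} (hK : IsCompact Kc)
    (hKs : Kc ⊆ s) :
    ∃ L : ℝ, 0 ≤ L ∧ ∀ p ∈ Kc, ∀ q ∈ Kc, dist (g p) (g q) ≤ L * dist p q := by
  rcases Kc.eq_empty_or_nonempty with rfl | hne
  · exact ⟨0, le_refl _, by simp⟩
  have hdata : ∀ z : Kc, ∃ K : NNReal, ∃ V : Set α, IsOpen V ∧ (z : α) ∈ V ∧
      LipschitzOnWith K g (V ∩ s) := by
    intro z
    obtain ⟨K, t, ht, hlip⟩ := h z (hKs z.2)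
    obtain ⟨V, hVo, hzV, hVt⟩ := mem_nhdsWithin.mp ht
    exact ⟨K, V, hVo, hzV, hlip.mono hVt⟩
  choose Kz V hVo hzV hlipz using hdata
  have hcov : Kc ⊆ ⋃ z : Kc, V z := fun p hp => mem_iUnion.mpr ⟨⟨p, hp⟩, hzV _⟩
  obtain ⟨F, hF⟩ := hK.elim_finite_subcover V hVo hcov
  have hcov' : Kc ⊆ ⋃ i : F, V i := by
    intro p hp
    obtain ⟨z, hz1, hz2⟩ := Set.mem_iUnion₂.mp (hF hp)
    exact mem_iUnion.mpr ⟨⟨z, hz1⟩, hz2⟩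
  obtain ⟨δ, hδ, hleb⟩ := lebesgue_number_lemma_of_metric hK (fun i : F => hVo i) hcov'
  obtain ⟨C, hC⟩ :=
    Metric.isBounded_iff.mp (hK.image_of_continuousOn (h.continuousOn'.mono hKs)).isBounded
  have hC0 : ∀ p ∈ Kc, ∀ q ∈ Kc, dist (g p) (g q) ≤ max C 0 :=
    fun p hp q hq =>
      le_trans (hC (mem_image_of_mem g hp) (mem_image_of_mem g hq)) (le_max_left _ _)
  set L₀ : NNReal := F.sup Kz with hL₀
  refine ⟨max (L₀ : ℝ) (max C 0 / δ), le_trans (by positivity) (le_max_left _ _), ?_⟩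
  intro p hp q hq
  rcases lt_or_ge (dist p q) δ with hd | hd
  · obtain ⟨i, hball⟩ := hleb p hp
    have hpV : p ∈ V i := hball (Metric.mem_ball_self hδ)
    have hqV : q ∈ V i := hball (by simpa [Metric.mem_ball, dist_comm] using hd)
    calc dist (g p) (g q) ≤ (Kz i : ℝ) * dist p q := by
          simpa using ((lipschitzOnWith_iff_dist_le_mul.mp (hlipz i)) p ⟨hpV, hKs hp⟩ q
            ⟨hqV, hKs hq⟩)
      _ ≤ max (L₀ : ℝ) (max C 0 / δ) * dist p q := by
          apply mul_le_mul_of_nonneg_right _ dist_nonneg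
          exact le_trans (by exact_mod_cast Finset.le_sup i.2) (le_max_left _ _)
  · calc dist (g p) (g q) ≤ max C 0 := hC0 p hp q hq
      _ = (max C 0 / δ) * δ := by field_simp
      _ ≤ max (L₀ : ℝ) (max C 0 / δ) * dist p q := by
          apply mul_le_mul (le_max_right _ _) hd (le_of_lt hδ)
          exact le_trans (by positivity) (le_max_left _ _)

lemma int_pow_sub (τ t : ℝ) (j : ℕ) :
    ∫ σ in τ..t, (σ - τ) ^ j = (t - τ) ^ (j + 1) / (j + 1) := by
  rw [intervalIntegral.integral_comp_sub_right (fun σ => σ ^ j) τ]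
  simp [integral_pow]

/-- Integral form of Grönwall's inequality. -/
lemma gronwall_int {v : ℝ → ℝ} {τ T A Kc : ℝ} (hτT : τ ≤ T)
    (hv : ContinuousOn v (Icc τ T)) (hA : 0 ≤ A) (hK : 0 ≤ Kc)
    (hineq : ∀ t ∈ Icc τ T, v t ≤ A + Kc * ∫ σ in τ..t, v σ) :
    v T ≤ A * Real.exp (Kc * (T - τ)) := by
  obtain ⟨C, hC⟩ := isCompact_Icc.exists_bound_of_continuousOn hv
  set M : ℝ := max C 0 with hMdef
  have hM0 : 0 ≤ M := le_max_right _ _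
  have hMb : ∀ t ∈ Icc τ T, v t ≤ M := fun t ht =>
    le_trans (le_trans (le_abs_self _) (hC t ht)) (le_max_left _ _)
  set P : ℕ → ℝ → ℝ := fun N t =>
    A * (∑ j ∈ Finset.range N, (Kc * (t - τ)) ^ j / j.factorial) +
      M * (Kc * (t - τ)) ^ N / N.factorial with hP
  have hPcont : ∀ N, Continuous (P N) := by intro N; fun_prop
  have hint : ∀ (N : ℕ) (t : ℝ), τ ≤ t → A + Kc * ∫ σ in τ..t, P N σ = P (N + 1) t := by
    intro N t ht
    have h1 : ∀ σ : ℝ, P N σ =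
        (∑ j ∈ Finset.range N, A * (Kc ^ j / j.factorial) * (σ - τ) ^ j) +
          (M * Kc ^ N / N.factorial) * (σ - τ) ^ N := by
      intro σ
      rw [hP]
      simp only [Finset.mul_sum, mul_pow]
      congr 1
      · exact Finset.sum_congr rfl fun j _ => by ring
      · ring
    have h2 : ∫ σ in τ..t, P N σ =
        (∑ j ∈ Finset.range N, A * (Kc ^ j / j.factorial) * ((t - τ) ^ (j + 1) / (j + 1))) +
          (M * Kc ^ N / N.factorial) * ((t - τ) ^ (N + 1) / (N + 1)) := by
      rw [intervalIntegral.integral_congr (g := fun σ =>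
        (∑ j ∈ Finset.range N, A * (Kc ^ j / j.factorial) * (σ - τ) ^ j) +
          (M * Kc ^ N / N.factorial) * (σ - τ) ^ N) (fun σ _ => h1 σ)]
      rw [intervalIntegral.integral_add, intervalIntegral.integral_finset_sum,
        intervalIntegral.integral_const_mul, int_pow_sub]
      · congr 1
        exact Finset.sum_congr rfl fun j _ => by
          rw [intervalIntegral.integral_const_mul, int_pow_sub]
      · intro j _
        exact (Continuous.intervalIntegrable (by fun_prop) _ _)
      · exact (Continuous.intervalIntegrable (by fun_prop) _ _)
      · exact (Continuous.intervalIntegrable (by fun_prop) _ _)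
    rw [h2, hP]
    simp only [Finset.sum_range_succ' (fun j => (Kc * (t - τ)) ^ j / (j.factorial : ℝ)) N]
    have hfact : ∀ j : ℕ, ((j + 1).factorial : ℝ) = (j + 1) * j.factorial := by
      intro j; rw [Nat.factorial_succ]; push_cast; ring
    simp only [mul_add, Finset.mul_sum]
    have hterm : ∀ j ∈ Finset.range N,
        Kc * (A * (Kc ^ j / j.factorial) * ((t - τ) ^ (j + 1) / (j + 1))) =
          A * ((Kc * (t - τ)) ^ (j + 1) / ((j + 1).factorial : ℝ)) := by
      intro j _
      rw [hfact j, mul_pow]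
      have h1 : ((j : ℝ) + 1) ≠ 0 := by positivity
      have h2 : ((j.factorial : ℝ)) ≠ 0 := by positivity
      field_simp
      ring
    rw [Finset.sum_congr rfl hterm]
    have hNterm : Kc * (M * Kc ^ N / N.factorial * ((t - τ) ^ (N + 1) / (N + 1))) =
        M * (Kc * (t - τ)) ^ (N + 1) / ((N + 1).factorial : ℝ) := by
      rw [hfact N, mul_pow]
      have h1 : ((N : ℝ) + 1) ≠ 0 := by positivity
      have h2 : ((N.factorial : ℝ)) ≠ 0 := by positivity
      field_simp
      ring
    rw [hNterm]
    simp only [pow_zero, Nat.factorial_zero, Nat.cast_one, div_one, mul_one]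
    ring
  have hvint : ∀ t ∈ Icc τ T, IntervalIntegrable v volume τ t := by
    intro t ht
    exact ContinuousOn.intervalIntegrable <| (hv.mono (by
      rw [uIcc_of_le ht.1]; exact Icc_subset_Icc le_rfl ht.2))
  have main : ∀ N : ℕ, ∀ t ∈ Icc τ T, v t ≤ P N t := by
    intro N
    induction N with
    | zero =>
      intro t ht
      have : P 0 t = M := by simp [hP]
      rw [this]; exact hMb t ht
    | succ N ih =>
      intro t ht
      have hint1 : ∫ σ in τ..t, v σ ≤ ∫ σ in τ..t, P N σ := by
        apply intervalIntegral.integral_mono_on ht.1 (hvint t ht)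
          ((hPcont N).intervalIntegrable _ _)
        intro σ hσ
        exact ih σ ⟨hσ.1, le_trans hσ.2 ht.2⟩
      calc v t ≤ A + Kc * ∫ σ in τ..t, v σ := hineq t ht
        _ ≤ A + Kc * ∫ σ in τ..t, P N σ := by
            exact add_le_add_right (mul_le_mul_of_nonneg_left hint1 hK) A
        _ = P (N + 1) t := hint N t ht.1
  have hTm : T ∈ Icc τ T := ⟨hτT, le_rfl⟩
  have hx : 0 ≤ Kc * (T - τ) := mul_nonneg hK (by linarith)
  have hbd : ∀ N : ℕ, v T ≤ A * Real.exp (Kc * (T - τ)) +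
      M * (Kc * (T - τ)) ^ N / N.factorial := by
    intro N
    calc v T ≤ P N T := main N T hTm
      _ ≤ A * Real.exp (Kc * (T - τ)) + M * (Kc * (T - τ)) ^ N / N.factorial := by
          apply add_le_add_left
          exact mul_le_mul_of_nonneg_left (Real.sum_le_exp_of_nonneg hx N) hA
  have hlim : Tendsto (fun N : ℕ => A * Real.exp (Kc * (T - τ)) +
      M * (Kc * (T - τ)) ^ N / N.factorial) atTop (nhds (A * Real.exp (Kc * (T - τ)))) := by
    have h1 : Tendsto (fun N : ℕ => ((Kc * (T - τ)) ^ N / N.factorial : ℝ)) atTop (nhds 0) :=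
      FloorSemiring.tendsto_pow_div_factorial_atTop _
    have h2 : Tendsto (fun N : ℕ => M * ((Kc * (T - τ)) ^ N / N.factorial)) atTop
        (nhds (M * 0)) := h1.const_mul M
    simp only [mul_zero] at h2
    have := tendsto_const_nhds (α := ℕ) (f := atTop)
      (x := A * Real.exp (Kc * (T - τ))) |>.add h2
    simpa [mul_div_assoc] using this
  exact ge_of_tendsto hlim (Filter.Eventually.of_forall hbd)

lemma le_supNorm' {E : Type*} [NormedAddCommGroup E] {g : ℝ → E} {M : ℝ}
    (hb : ∀ t, 0 ≤ t → ‖g t‖ ≤ M) {t : ℝ} (ht : 0 ≤ t) : ‖g t‖ ≤ supNorm g := by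
  have hbdd : BddAbove (Set.range fun t : Ici (0:ℝ) => ‖g (t : ℝ)‖) := by
    refine ⟨M, ?_⟩
    rintro x ⟨s, rfl⟩
    exact hb s s.2
  exact le_ciSup hbdd (⟨t, ht⟩ : Ici (0:ℝ))

lemma supNorm_nonneg' {E : Type*} [NormedAddCommGroup E] {g : ℝ → E} {M : ℝ}
    (hb : ∀ t, 0 ≤ t → ‖g t‖ ≤ M) : 0 ≤ supNorm g :=
  le_trans (norm_nonneg (g 0)) (le_supNorm' hb le_rfl)

lemma meas_comp' {α β : Type*} [TopologicalSpace α] [MeasurableSpace α]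
    [OpensMeasurableSpace α] [TopologicalSpace β] [MeasurableSpace β] [BorelSpace β]
    {S : Set α} {f : α → β} (hf : ContinuousOn f S) {g : ℝ → α}
    (hg : Measurable g) (hmem : ∀ t, g t ∈ S) : Measurable fun t => f (g t) := by
  have h1 : Measurable fun t => (⟨g t, hmem t⟩ : S) := hg.subtype_mk
  exact ((continuousOn_iff_continuous_restrict.mp hf).measurable).comp h1

lemma aemeasurable_pi' {n : ℕ} {f : ℝ → Fin n → ℝ} {μ : MeasureTheory.Measure ℝ}
    (h : ∀ i, AEMeasurable (fun x => f x i) μ) : AEMeasurable f μ := by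
  choose g hg hge using h
  refine ⟨fun x i => g i x, measurable_pi_iff.mpr hg, ?_⟩
  filter_upwards [MeasureTheory.ae_all_iff.mpr hge] with x hx
  funext i; exact hx i

lemma mulVec_norm_le' {n : ℕ} (M : Matrix (Fin n) (Fin n) ℝ) (w : Fin n → ℝ) {C : ℝ}
    (hC : 0 ≤ C) (hCb : ∀ i j, |M i j| ≤ C) : ‖M *ᵥ w‖ ≤ n * C * ‖w‖ := by
  rw [pi_norm_le_iff_of_nonneg (by positivity)]
  intro i
  calc ‖(M *ᵥ w) i‖ = |∑ j, M i j * w j| := rfl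
    _ ≤ ∑ j, |M i j * w j| := Finset.abs_sum_le_sum_abs _ _
    _ ≤ ∑ _j : Fin n, C * ‖w‖ := by
        apply Finset.sum_le_sum
        intro j _
        rw [abs_mul]
        exact mul_le_mul (hCb i j) (norm_le_pi_norm w j) (abs_nonneg _) hC
    _ = n * C * ‖w‖ := by simp [Finset.sum_const, mul_assoc]

lemma sInf_bd_facts {α : Type*} (KP : ℝ → Set α) (hmono : Monotone KP) (F : α → ℝ)
    (hne : ∀ s, ∃ L, 0 ≤ L ∧ ∀ p ∈ KP s, F p ≤ L) :
    ∃ I : ℝ → ℝ, (∀ s, 0 ≤ I s) ∧ (∀ s, ∀ p ∈ KP s, F p ≤ I s) ∧ Monotone I := by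
  set Sset : ℝ → Set ℝ := fun s => {L | 0 ≤ L ∧ ∀ p ∈ KP s, F p ≤ L} with hSset
  have hSne : ∀ s, (Sset s).Nonempty := fun s => hne s
  refine ⟨fun s => sInf (Sset s), fun s => le_csInf (hSne s) fun L hL => hL.1, ?_, ?_⟩
  · intro s p hp
    exact le_csInf (hSne s) fun L hL => hL.2 p hp
  · intro s s' hss
    apply csInf_le_csInf ⟨0, fun L hL => hL.1⟩ (hSne s')
    intro L hL
    exact ⟨hL.1, fun p hp => hL.2 p (hmono hss hp)⟩

lemma sInf_lip_facts {α : Type*} [PseudoMetricSpace α] (KP : ℝ → Set α) (hmono : Monotone KP)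
    (F : α → α → ℝ) (hFself : ∀ p q, dist p q = 0 → F p q ≤ 0)
    (hne : ∀ s, ∃ L, 0 ≤ L ∧ ∀ p ∈ KP s, ∀ q ∈ KP s, F p q ≤ L * dist p q) :
    ∃ I : ℝ → ℝ, (∀ s, 0 ≤ I s) ∧ (∀ s, ∀ p ∈ KP s, ∀ q ∈ KP s, F p q ≤ I s * dist p q) ∧
      Monotone I := by
  set Sset : ℝ → Set ℝ :=
    fun s => {L | 0 ≤ L ∧ ∀ p ∈ KP s, ∀ q ∈ KP s, F p q ≤ L * dist p q} with hSset
  have hSne : ∀ s, (Sset s).Nonempty := fun s => hne s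
  refine ⟨fun s => sInf (Sset s), fun s => le_csInf (hSne s) fun L hL => hL.1, ?_, ?_⟩
  · intro s p hp q hq
    rcases eq_or_lt_of_le (dist_nonneg (x := p) (y := q)) with h | h
    · calc F p q ≤ 0 := hFself p q h.symm
        _ = sInf (Sset s) * dist p q := by rw [← h]; ring
    · rw [← div_le_iff₀ h]
      apply le_csInf (hSne s)
      intro L hL
      rw [div_le_iff₀ h]
      exact hL.2 p hp q hq
  · intro s s' hss
    apply csInf_le_csInf ⟨0, fun L hL => hL.1⟩ (hSne s')
    intro L hL
    exact ⟨hL.1, fun p hp q hq => hL.2 p (hmono hss hp) q (hmono hss hq)⟩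

set_option maxHeartbeats 1600000 in
/-- the Fact containing estimate (3.4): there exist non-decreasing
functions `κ, R : ℝ₊ → ℝ₊`, depending only on the system data, such that between consecutive
jump times the observer error satisfies
`|x(t) − z(t)| ≤ (|x(τ_i) − z(τ_i)| + r ‖e‖ R(s)) exp(r κ(s))` with
`s = ‖y‖ + ‖e‖ + ‖u‖ + ‖x‖` (sup norms over `ℝ₊`). -/
theorem inter_jump_error_growth_estimate
    (n k m : ℕ)
    (U : Set (Fin m → ℝ)) (hUne : U.Nonempty) (hUcl : IsClosed U)
    (A : (Fin k → ℝ) → (Fin m → ℝ) → Matrix (Fin n) (Fin n) ℝ)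
    (b : (Fin k → ℝ) → (Fin m → ℝ) → (Fin n → ℝ))
    (Cm : (Fin k → ℝ) → Matrix (Fin k) (Fin n) ℝ)
    (f : (Fin k → ℝ) → (Fin m → ℝ) → (Fin k → ℝ))
    (hA : ∀ i j, LocLipOn ((univ : Set (Fin k → ℝ)) ×ˢ U) (fun p => A p.1 p.2 i j))
    (hb : LocLipOn ((univ : Set (Fin k → ℝ)) ×ˢ U) (fun p => b p.1 p.2))
    (hCm : ∀ i j, LocLipOn (univ : Set (Fin k → ℝ)) (fun y => Cm y i j))
    (hf : LocLipOn ((univ : Set (Fin k → ℝ)) ×ˢ U) (fun p => f p.1 p.2))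
    (X : (Fin n → ℝ) → (Fin k → ℝ) → (ℝ → (Fin m → ℝ)) → ℝ → (Fin n → ℝ))
    (Y : (Fin n → ℝ) → (Fin k → ℝ) → (ℝ → (Fin m → ℝ)) → ℝ → (Fin k → ℝ))
    (hXY : ∀ x₀ y₀ u, AdmLoc m U u →
      IsSystemSol n k m (univ : Set ((Fin n → ℝ) × (Fin k → ℝ))) A b Cm f u
          (X x₀ y₀ u) (Y x₀ y₀ u) ∧
        X x₀ y₀ u 0 = x₀ ∧ Y x₀ y₀ u 0 = y₀)
    (hUniq : ∀ x₀ y₀ u, AdmLoc m U u → ∀ x y,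
      IsSystemSol n k m (univ : Set ((Fin n → ℝ) × (Fin k → ℝ))) A b Cm f u x y →
        x 0 = x₀ → y 0 = y₀ → ∀ t, 0 ≤ t → x t = X x₀ y₀ u t ∧ y t = Y x₀ y₀ u t)
    (r : ℝ) (hr : 0 < r)
    (Φop : (ℝ → (Fin k → ℝ)) → (ℝ → (Fin m → ℝ)) → ℝ → Matrix (Fin n) (Fin n) ℝ)
    (hΦop : ∀ (y : ℝ → (Fin k → ℝ)) (u : ℝ → (Fin m → ℝ)),
      Measurable y → Measurable u → LocBddF y → LocBddF u →
        IsTransition n k m A y u (Φop y u))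
    (hH1 : H1prop n k m (univ : Set ((Fin n → ℝ) × (Fin k → ℝ))) U Y r)
    (hH2 : ∀ ξ : Fin n → ℝ, ∀ (y : ℝ → (Fin k → ℝ)) (u : ℝ → (Fin m → ℝ)),
      Measurable y → (∃ M : ℝ, ∀ t ∈ Icc (0:ℝ) r, ‖y t‖ ≤ M) → AdmOn m r U u →
      ∃ ζ : ℝ → (Fin n → ℝ), ContinuousOn ζ (Icc (0:ℝ) r) ∧ ζ 0 = ξ ∧
        ∀ t ∈ Icc (0:ℝ) r,
          ζ t = ξ + ∫ s in (0:ℝ)..t, (A (y s) (u s) *ᵥ ζ s + b (y s) (u s)))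
    :
    ∃ κ R : ℝ → ℝ,
      MonotoneOn κ (Ici (0:ℝ)) ∧ MonotoneOn R (Ici (0:ℝ)) ∧
      (∀ s, 0 ≤ s → 0 ≤ κ s) ∧ (∀ s, 0 ≤ s → 0 ≤ R s) ∧
      ∀ (x₀ : Fin n → ℝ) (y₀ : Fin k → ℝ) (z₀ : Fin n → ℝ)
        (u : ℝ → (Fin m → ℝ)) (e : ℝ → (Fin k → ℝ)) (z : ℝ → (Fin n → ℝ)),
        AdmBdd m U u →
        (Measurable e ∧ ∃ M : ℝ, ∀ t, 0 ≤ t → ‖e t‖ ≤ M) →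
        (∃ M : ℝ, ∀ t, 0 ≤ t → ‖X x₀ y₀ u t‖ ≤ M) →
        (∃ M : ℝ, ∀ t, 0 ≤ t → ‖Y x₀ y₀ u t‖ ≤ M) →
        IsObs n k m r A b (Pop n k m r b Cm f Φop) u
          (fun t => Y x₀ y₀ u t + e t) z₀ z →
        ∀ i : ℕ, ∀ t ∈ Ioo ((i : ℝ) * r) (((i : ℝ) + 1) * r),
          ‖X x₀ y₀ u t - z t‖ ≤
            (‖X x₀ y₀ u ((i : ℝ) * r) - z ((i : ℝ) * r)‖ +
                r * supNorm e *
                  R (supNorm (Y x₀ y₀ u) + supNorm e + supNorm u + supNorm (X x₀ y₀ u))) *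
              Real.exp (r *
                κ (supNorm (Y x₀ y₀ u) + supNorm e + supNorm u + supNorm (X x₀ y₀ u))) := by
  classical
  -- compact parameter sets
  set KP : ℝ → Set ((Fin k → ℝ) × (Fin m → ℝ)) :=
    fun s => (Metric.closedBall 0 s) ×ˢ (U ∩ Metric.closedBall 0 s) with hKPdef
  have hKPsub : ∀ s, KP s ⊆ (univ : Set (Fin k → ℝ)) ×ˢ U := by
    intro s p hp; exact ⟨mem_univ _, hp.2.1⟩
  have hKPcomp : ∀ s, IsCompact (KP s) := fun s =>
    (isCompact_closedBall _ _).prod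
      (Metric.isCompact_of_isClosed_isBounded (hUcl.inter Metric.isClosed_closedBall)
        (Metric.isBounded_closedBall.subset inter_subset_right))
  have hKPmono : Monotone KP := by
    intro s s' hss
    exact Set.prod_mono (Metric.closedBall_subset_closedBall hss)
      (inter_subset_inter_right _ (Metric.closedBall_subset_closedBall hss))
  -- the three constants as functions of s
  have hKfacts : ∃ I : ℝ → ℝ, (∀ s, 0 ≤ I s) ∧
      (∀ s, ∀ p ∈ KP s, (∑ i, ∑ j, |A p.1 p.2 i j|) ≤ I s) ∧ Monotone I := by
    apply sInf_bd_facts KP hKPmono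
    intro s
    have hCex : ∀ ij : Fin n × Fin n, ∃ C, ∀ p ∈ KP s, |A p.1 p.2 ij.1 ij.2| ≤ C := by
      intro ij
      obtain ⟨C, hC⟩ := (hKPcomp s).exists_bound_of_continuousOn
        (((hA ij.1 ij.2).continuousOn').mono (hKPsub s))
      exact ⟨C, fun p hp => by simpa using hC p hp⟩
    choose C hC using hCex
    refine ⟨∑ ij : Fin n × Fin n, max (C ij) 0,
      Finset.sum_nonneg fun ij _ => le_max_right _ _, ?_⟩
    intro p hp
    rw [← Finset.sum_product']
    apply Finset.sum_le_sum
    intro ij _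
    exact le_trans (hC ij p hp) (le_max_left _ _)
  obtain ⟨IK, hIK0, hIKb, hIKmono⟩ := hKfacts
  have hAfacts : ∃ I : ℝ → ℝ, (∀ s, 0 ≤ I s) ∧
      (∀ s, ∀ p ∈ KP s, ∀ q ∈ KP s,
        (∑ i, ∑ j, |A p.1 p.2 i j - A q.1 q.2 i j|) ≤ I s * dist p q) ∧ Monotone I := by
    apply sInf_lip_facts KP hKPmono
    · intro p q hpq
      rw [dist_eq_zero.mp hpq]
      simp
    · intro s
      have hLex : ∀ ij : Fin n × Fin n, ∃ L, 0 ≤ L ∧ ∀ p ∈ KP s, ∀ q ∈ KP s,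
          |A p.1 p.2 ij.1 ij.2 - A q.1 q.2 ij.1 ij.2| ≤ L * dist p q := by
        intro ij
        obtain ⟨L, hL0, hL⟩ := (hA ij.1 ij.2).lipOnCompact (hKPcomp s) (hKPsub s)
        exact ⟨L, hL0, fun p hp q hq => by
          simpa [Real.dist_eq] using hL p hp q hq⟩
      choose L hL0 hL using hLex
      refine ⟨∑ ij : Fin n × Fin n, L ij, Finset.sum_nonneg fun ij _ => hL0 ij, ?_⟩
      intro p hp q hq
      rw [← Finset.sum_product', Finset.sum_mul]
      apply Finset.sum_le_sum
      intro ij _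
      exact hL ij p hp q hq
  obtain ⟨IA, hIA0, hIAb, hIAmono⟩ := hAfacts
  have hBfacts : ∃ I : ℝ → ℝ, (∀ s, 0 ≤ I s) ∧
      (∀ s, ∀ p ∈ KP s, ∀ q ∈ KP s,
        ‖b p.1 p.2 - b q.1 q.2‖ ≤ I s * dist p q) ∧ Monotone I := by
    apply sInf_lip_facts KP hKPmono
    · intro p q hpq
      rw [dist_eq_zero.mp hpq]
      simp
    · intro s
      obtain ⟨L, hL0, hL⟩ := hb.lipOnCompact (hKPcomp s) (hKPsub s)
      exact ⟨L, hL0, fun p hp q hq => by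
        simpa [dist_eq_norm] using hL p hp q hq⟩
  obtain ⟨IB, hIB0, hIBb, hIBmono⟩ := hBfacts
  refine ⟨fun s => n * IK s, fun s => n * max s 0 * IA s + IB s, ?_, ?_, ?_, ?_, ?_⟩
  · intro a _ b' _ hab
    show (n:ℝ) * IK a ≤ (n:ℝ) * IK b'
    exact mul_le_mul_of_nonneg_left (hIKmono hab) (Nat.cast_nonneg n)
  · intro a _ b' _ hab
    have h1 : (n : ℝ) * max a 0 * IA a ≤ n * max b' 0 * IA b' := by
      apply mul_le_mul
      · exact mul_le_mul_of_nonneg_left (max_le_max hab le_rfl) (Nat.cast_nonneg n)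
      · exact hIAmono hab
      · exact hIA0 a
      · positivity
    have h2 : IB a ≤ IB b' := hIBmono hab
    show (n:ℝ) * max a 0 * IA a + IB a ≤ (n:ℝ) * max b' 0 * IA b' + IB b'
    linarith
  · intro s _
    show (0:ℝ) ≤ (n:ℝ) * IK s
    exact mul_nonneg (Nat.cast_nonneg n) (hIK0 s)
  · intro s _
    show (0:ℝ) ≤ (n:ℝ) * max s 0 * IA s + IB s
    exact add_nonneg (mul_nonneg (mul_nonneg (Nat.cast_nonneg n) (le_max_right _ _))
      (hIA0 s)) (hIB0 s)
  intro x₀ y₀ z₀ u e z hu he hxB hyB hobs i t₁ ht₁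
  obtain ⟨humeas, humem, Mu, hub⟩ := hu
  obtain ⟨hemeas, Me, heb⟩ := he
  obtain ⟨Mx, hxb⟩ := hxB
  obtain ⟨My, hyb⟩ := hyB
  have hAdm : AdmLoc m U u := ⟨humeas, humem, fun T => ⟨Mu, fun t ht => hub t ht.1⟩⟩
  obtain ⟨hsol, hx0, hy0⟩ := hXY x₀ y₀ u hAdm
  set x := X x₀ y₀ u with hxdef
  set y := Y x₀ y₀ u with hydef
  obtain ⟨hxc, hyc, -, hxeq, -⟩ := hsol
  obtain ⟨hz0, hflow, hjump⟩ := hobs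
  obtain ⟨hzc, hzeq⟩ := hflow i
  simp only [] at hzeq
  set sy := supNorm y with hsydef
  set se := supNorm e with hsedef
  set su := supNorm u with hsudef
  set sx := supNorm x with hsxdef
  set s₀ := sy + se + su + sx with hs₀def
  have hsy0 : 0 ≤ sy := supNorm_nonneg' hyb
  have hse0 : 0 ≤ se := supNorm_nonneg' heb
  have hsu0 : 0 ≤ su := supNorm_nonneg' (fun t ht => hub t ht)
  have hsx0 : 0 ≤ sx := supNorm_nonneg' hxb
  have hs₀0 : 0 ≤ s₀ := by rw [hs₀def]; linarith
  have hsyb : ∀ σ, 0 ≤ σ → ‖y σ‖ ≤ sy := fun σ hσ => le_supNorm' hyb hσ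
  have hseb : ∀ σ, 0 ≤ σ → ‖e σ‖ ≤ se := fun σ hσ => le_supNorm' heb hσ
  have hsub' : ∀ σ, 0 ≤ σ → ‖u σ‖ ≤ su := fun σ hσ => le_supNorm' hub hσ
  have hsxb : ∀ σ, 0 ≤ σ → ‖x σ‖ ≤ sx := fun σ hσ => le_supNorm' hxb hσ
  have hmem1 : ∀ σ, 0 ≤ σ → (y σ, u σ) ∈ KP s₀ := by
    intro σ hσ
    refine ⟨mem_closedBall_zero_iff.mpr ?_, humem σ hσ, mem_closedBall_zero_iff.mpr ?_⟩
    · have := hsyb σ hσ; linarith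
    · have := hsub' σ hσ; linarith
  have hmem2 : ∀ σ, 0 ≤ σ → (y σ + e σ, u σ) ∈ KP s₀ := by
    intro σ hσ
    refine ⟨mem_closedBall_zero_iff.mpr ?_, humem σ hσ, mem_closedBall_zero_iff.mpr ?_⟩
    · have h1 := hsyb σ hσ; have h2 := hseb σ hσ
      calc ‖y σ + e σ‖ ≤ ‖y σ‖ + ‖e σ‖ := norm_add_le _ _
        _ ≤ s₀ := by linarith
    · have := hsub' σ hσ; linarith
  set τ := (i : ℝ) * r with hτdef
  have hτ0 : 0 ≤ τ := mul_nonneg (Nat.cast_nonneg i) hr.le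
  have hiR : ((i : ℝ) + 1) * r = τ + r := by rw [hτdef]; ring
  rw [hiR] at ht₁ hzeq hzc
  have hτt₁ : τ < t₁ := ht₁.1
  have ht₁r : t₁ < τ + r := ht₁.2
  set K := (n : ℝ) * IK s₀ with hKdef
  have hK0' : 0 ≤ K := mul_nonneg (Nat.cast_nonneg n) (hIK0 s₀)
  set Rv := (n : ℝ) * max s₀ 0 * IA s₀ + IB s₀ with hRvdef
  have hRv0 : 0 ≤ Rv := by
    rw [hRvdef]
    exact add_nonneg (mul_nonneg (mul_nonneg (Nat.cast_nonneg n) (le_max_right _ _))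
      (hIA0 s₀)) (hIB0 s₀)
  set c := Rv * se with hcdef
  have hc0 : 0 ≤ c := mul_nonneg hRv0 hse0
  -- entrywise bounds
  have hentK : ∀ p ∈ KP s₀, ∀ i' j', |A p.1 p.2 i' j'| ≤ IK s₀ := by
    intro p hp i' j'
    refine le_trans ?_ (hIKb s₀ p hp)
    calc |A p.1 p.2 i' j'| ≤ ∑ j, |A p.1 p.2 i' j| :=
          Finset.single_le_sum (f := fun j => |A p.1 p.2 i' j|)
            (fun _ _ => abs_nonneg _) (Finset.mem_univ _)
      _ ≤ ∑ i, ∑ j, |A p.1 p.2 i j| :=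
          Finset.single_le_sum (f := fun i => ∑ j, |A p.1 p.2 i j|)
            (fun _ _ => Finset.sum_nonneg fun _ _ => abs_nonneg _) (Finset.mem_univ _)
  have hentA : ∀ p ∈ KP s₀, ∀ q ∈ KP s₀, ∀ i' j',
      |A p.1 p.2 i' j' - A q.1 q.2 i' j'| ≤ IA s₀ * dist p q := by
    intro p hp q hq i' j'
    refine le_trans ?_ (hIAb s₀ p hp q hq)
    calc |A p.1 p.2 i' j' - A q.1 q.2 i' j'| ≤ ∑ j, |A p.1 p.2 i' j - A q.1 q.2 i' j| :=
          Finset.single_le_sum (f := fun j => |A p.1 p.2 i' j - A q.1 q.2 i' j|)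
            (fun _ _ => abs_nonneg _) (Finset.mem_univ _)
      _ ≤ ∑ i, ∑ j, |A p.1 p.2 i j - A q.1 q.2 i j| :=
          Finset.single_le_sum (f := fun i => ∑ j, |A p.1 p.2 i j - A q.1 q.2 i j|)
            (fun _ _ => Finset.sum_nonneg fun _ _ => abs_nonneg _) (Finset.mem_univ _)
  have hAvec : ∀ p ∈ KP s₀, ∀ w : Fin n → ℝ, ‖A p.1 p.2 *ᵥ w‖ ≤ K * ‖w‖ := by
    intro p hp w
    have := mulVec_norm_le' (A p.1 p.2) w (hIK0 s₀) (hentK p hp)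
    calc ‖A p.1 p.2 *ᵥ w‖ ≤ n * IK s₀ * ‖w‖ := this
      _ = K * ‖w‖ := by rw [hKdef]
  -- perturbation bound
  have hpert : ∀ σ, 0 ≤ σ →
      ‖(A (y σ) (u σ) - A (y σ + e σ) (u σ)) *ᵥ x σ +
        (b (y σ) (u σ) - b (y σ + e σ) (u σ))‖ ≤ c := by
    intro σ hσ
    have hp := hmem1 σ hσ
    have hq := hmem2 σ hσ
    have hd : dist ((y σ, u σ) : (Fin k → ℝ) × (Fin m → ℝ)) (y σ + e σ, u σ) = ‖e σ‖ := by
      rw [Prod.dist_eq]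
      simp only [dist_eq_norm]
      rw [show y σ - (y σ + e σ) = -(e σ) by abel, norm_neg, sub_self, norm_zero]
      exact max_eq_left (norm_nonneg _)
    have h1 : ‖(A (y σ) (u σ) - A (y σ + e σ) (u σ)) *ᵥ x σ‖ ≤
        n * (IA s₀ * ‖e σ‖) * ‖x σ‖ := by
      apply mulVec_norm_le' _ _ (mul_nonneg (hIA0 s₀) (norm_nonneg _))
      intro i' j'
      rw [Matrix.sub_apply]
      have := hentA _ hp _ hq i' j'
      rw [hd] at this
      exact this
    have h2 : ‖b (y σ) (u σ) - b (y σ + e σ) (u σ)‖ ≤ IB s₀ * ‖e σ‖ := by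
      have := hIBb s₀ _ hp _ hq
      rw [hd] at this
      exact this
    have hxσ : ‖x σ‖ ≤ s₀ := by have := hsxb σ hσ; linarith
    have heσ : ‖e σ‖ ≤ se := hseb σ hσ
    have hmax : max s₀ 0 = s₀ := max_eq_left hs₀0
    calc ‖(A (y σ) (u σ) - A (y σ + e σ) (u σ)) *ᵥ x σ +
          (b (y σ) (u σ) - b (y σ + e σ) (u σ))‖
        ≤ n * (IA s₀ * ‖e σ‖) * ‖x σ‖ + IB s₀ * ‖e σ‖ :=
          le_trans (norm_add_le _ _) (add_le_add h1 h2)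
      _ ≤ n * (IA s₀ * ‖e σ‖) * s₀ + IB s₀ * ‖e σ‖ := by
          have hnn : (0:ℝ) ≤ n * (IA s₀ * ‖e σ‖) :=
            mul_nonneg (Nat.cast_nonneg n) (mul_nonneg (hIA0 s₀) (norm_nonneg _))
          exact add_le_add_left (mul_le_mul_of_nonneg_left hxσ hnn) _
      _ = (n * s₀ * IA s₀ + IB s₀) * ‖e σ‖ := by ring
      _ ≤ (n * s₀ * IA s₀ + IB s₀) * se := by
          apply mul_le_mul_of_nonneg_left heσ
          exact add_nonneg (mul_nonneg (mul_nonneg (Nat.cast_nonneg n) hs₀0)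
            (hIA0 s₀)) (hIB0 s₀)
      _ = c := by rw [hcdef, hRvdef, hmax]
  -- measurable modifications
  obtain ⟨u₀, hu₀⟩ := hUne
  set u' : ℝ → Fin m → ℝ := fun σ => if 0 ≤ σ then u σ else u₀ with hu'def
  have hu'meas : Measurable u' := Measurable.ite measurableSet_Ici humeas measurable_const
  have hu'mem : ∀ σ, u' σ ∈ U := by
    intro σ
    by_cases h : 0 ≤ σ
    · rw [hu'def]; simp only [if_pos h]; exact humem σ h
    · rw [hu'def]; simp only [if_neg h]; exact hu₀
  have hu'eq : ∀ σ, 0 ≤ σ → u' σ = u σ := fun σ h => if_pos h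
  set y' : ℝ → Fin k → ℝ := fun σ => y (max σ 0) with hy'def
  have hy'cont : Continuous y' :=
    hyc.comp_continuous (continuous_id.max continuous_const) fun σ => mem_Ici.mpr (le_max_right _ _)
  have hy'eq : ∀ σ, 0 ≤ σ → y' σ = y σ := fun σ h => by
    rw [hy'def]; simp only [max_eq_left h]
  set x' : ℝ → Fin n → ℝ := fun σ => x (max σ 0) with hx'def
  have hx'cont : Continuous x' :=
    hxc.comp_continuous (continuous_id.max continuous_const) fun σ => mem_Ici.mpr (le_max_right _ _)
  have hx'eq : ∀ σ, 0 ≤ σ → x' σ = x σ := fun σ h => by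
    rw [hx'def]; simp only [max_eq_left h]
  have hpair1 : Measurable fun σ => (y' σ, u' σ) := hy'cont.measurable.prodMk hu'meas
  have hpair2 : Measurable fun σ => (y' σ + e σ, u' σ) :=
    (hy'cont.measurable.add hemeas).prodMk hu'meas
  have hmemS1 : ∀ σ, ((y' σ, u' σ) : (Fin k → ℝ) × (Fin m → ℝ)) ∈
      (univ : Set (Fin k → ℝ)) ×ˢ U := fun σ => ⟨mem_univ _, hu'mem σ⟩
  have hmemS2 : ∀ σ, ((y' σ + e σ, u' σ) : (Fin k → ℝ) × (Fin m → ℝ)) ∈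
      (univ : Set (Fin k → ℝ)) ×ˢ U := fun σ => ⟨mem_univ _, hu'mem σ⟩
  have hAm1 : ∀ i' j', Measurable fun σ => A (y' σ) (u' σ) i' j' := fun i' j' =>
    meas_comp' ((hA i' j').continuousOn') hpair1 hmemS1
  have hAm2 : ∀ i' j', Measurable fun σ => A (y' σ + e σ) (u' σ) i' j' := fun i' j' =>
    meas_comp' ((hA i' j').continuousOn') hpair2 hmemS2
  have hbm1 : Measurable fun σ => b (y' σ) (u' σ) :=
    meas_comp' hb.continuousOn' hpair1 hmemS1
  have hbm2 : Measurable fun σ => b (y' σ + e σ) (u' σ) :=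
    meas_comp' hb.continuousOn' hpair2 hmemS2
  -- the two integrands
  set G : ℝ → Fin n → ℝ := fun σ => A (y σ) (u σ) *ᵥ x σ + b (y σ) (u σ) with hGdef
  set H : ℝ → Fin n → ℝ := fun σ => A (y σ + e σ) (u σ) *ᵥ z σ + b (y σ + e σ) (u σ) with hHdef
  obtain ⟨CB, hCB⟩ := (hKPcomp s₀).exists_bound_of_continuousOn
    (hb.continuousOn'.mono (hKPsub s₀))
  -- integrability of G
  have hGm : Measurable fun σ => A (y' σ) (u' σ) *ᵥ x' σ + b (y' σ) (u' σ) := by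
    apply Measurable.add _ hbm1
    rw [measurable_pi_iff]
    intro i'
    have : (fun σ => (A (y' σ) (u' σ) *ᵥ x' σ) i') =
        fun σ => ∑ j', A (y' σ) (u' σ) i' j' * x' σ j' := rfl
    rw [this]
    apply Finset.measurable_sum
    intro j' _
    exact (hAm1 i' j').mul ((measurable_pi_apply j').comp hx'cont.measurable)
  have hGbd : ∀ σ, 0 ≤ σ → ‖G σ‖ ≤ K * s₀ + CB := by
    intro σ hσ
    have hp := hmem1 σ hσ
    calc ‖G σ‖ ≤ ‖A (y σ) (u σ) *ᵥ x σ‖ + ‖b (y σ) (u σ)‖ := norm_add_le _ _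
      _ ≤ K * ‖x σ‖ + CB := add_le_add (hAvec _ hp _) (hCB _ hp)
      _ ≤ K * s₀ + CB := by
          have h1 : ‖x σ‖ ≤ s₀ := by have := hsxb σ hσ; linarith
          have := mul_le_mul_of_nonneg_left h1 hK0'
          linarith
  have hGes : ∀ a' b', 0 ≤ a' → AEStronglyMeasurable G (volume.restrict (Ioc a' b')) := by
    intro a' b' ha
    apply (hGm.aestronglyMeasurable.restrict).congr
    filter_upwards [ae_restrict_mem measurableSet_Ioc] with σ hσ
    have h0 : 0 ≤ σ := le_trans ha hσ.1.le
    rw [hGdef]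
    simp only [hy'eq σ h0, hx'eq σ h0, hu'eq σ h0]
  have hGint : ∀ a' b', 0 ≤ a' → a' ≤ b' → IntervalIntegrable G volume a' b' := by
    intro a' b' ha hab
    rw [intervalIntegrable_iff_integrableOn_Ioc_of_le hab]
    apply Integrable.mono' (integrableOn_const (C := K * s₀ + CB) measure_Ioc_lt_top.ne)
      (hGes a' b' ha)
    filter_upwards [ae_restrict_mem measurableSet_Ioc] with σ hσ
    exact hGbd σ (le_trans ha hσ.1.le)
  have hxseg : ∀ t ∈ Icc τ t₁, x t = x τ + ∫ σ in τ..t, G σ := by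
    intro t ht
    have h1 := hxeq t (le_trans hτ0 ht.1)
    have h2 := hxeq τ hτ0
    have hadd := intervalIntegral.integral_add_adjacent_intervals
      (hGint 0 τ le_rfl hτ0) (hGint τ t hτ0 ht.1)
    rw [h1, h2, ← hadd]
    abel
  -- integrability of H
  have hIccsub : Icc τ t₁ ⊆ Ico τ (τ + r) := Icc_subset_Ico_right ht₁r
  have hzc' : ContinuousOn z (Icc τ t₁) := hzc.mono hIccsub
  obtain ⟨Mz, hMz⟩ := isCompact_Icc.exists_bound_of_continuousOn hzc'
  have hHbd : ∀ σ ∈ Icc τ t₁, ‖H σ‖ ≤ K * Mz + CB := by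
    intro σ hσ
    have hσ0 : 0 ≤ σ := le_trans hτ0 hσ.1
    have hq := hmem2 σ hσ0
    calc ‖H σ‖ ≤ ‖A (y σ + e σ) (u σ) *ᵥ z σ‖ + ‖b (y σ + e σ) (u σ)‖ := norm_add_le _ _
      _ ≤ K * ‖z σ‖ + CB := add_le_add (hAvec _ hq _) (hCB _ hq)
      _ ≤ K * Mz + CB := by
          have := mul_le_mul_of_nonneg_left (hMz σ hσ) hK0'
          linarith
  have hHint : ∀ t ∈ Icc τ t₁, IntervalIntegrable H volume τ t := by
    intro t ht
    rw [intervalIntegrable_iff_integrableOn_Ioc_of_le ht.1]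
    have hsub2 : Ioc τ t ⊆ Icc τ t₁ := fun σ hσ => ⟨hσ.1.le, le_trans hσ.2 ht.2⟩
    have hzres : AEMeasurable z (volume.restrict (Ioc τ t)) :=
      ((hzc'.mono hsub2).aestronglyMeasurable measurableSet_Ioc).aemeasurable
    have hmain : AEStronglyMeasurable
        (fun σ => A (y' σ + e σ) (u' σ) *ᵥ z σ + b (y' σ + e σ) (u' σ))
        (volume.restrict (Ioc τ t)) := by
      rw [aestronglyMeasurable_iff_aemeasurable]
      apply AEMeasurable.add _ hbm2.aemeasurable
      apply aemeasurable_pi'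
      intro i'
      have : (fun σ => (A (y' σ + e σ) (u' σ) *ᵥ z σ) i') =
          fun σ => ∑ j', A (y' σ + e σ) (u' σ) i' j' * z σ j' := rfl
      rw [this]
      apply Finset.aemeasurable_fun_sum
      intro j' _
      exact ((hAm2 i' j').aemeasurable).mul
        ((measurable_pi_apply j').comp_aemeasurable hzres)
    have hHes : AEStronglyMeasurable H (volume.restrict (Ioc τ t)) := by
      apply hmain.congr
      filter_upwards [ae_restrict_mem measurableSet_Ioc] with σ hσ
      have h0 : 0 ≤ σ := le_trans hτ0 hσ.1.le
      rw [hHdef]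
      simp only [hy'eq σ h0, hu'eq σ h0]
    apply Integrable.mono' (integrableOn_const (C := K * Mz + CB) measure_Ioc_lt_top.ne) hHes
    filter_upwards [ae_restrict_mem measurableSet_Ioc] with σ hσ
    exact hHbd σ (hsub2 hσ)
  -- the error integral equation
  have hweq : ∀ t ∈ Icc τ t₁, x t - z t = (x τ - z τ) + ∫ σ in τ..t, (G σ - H σ) := by
    intro t ht
    have h1 := hxseg t ht
    have h2 := hzeq t ⟨ht.1, lt_of_le_of_lt ht.2 ht₁r⟩
    rw [intervalIntegral.integral_sub (hGint τ t hτ0 ht.1) (hHint t ht), h1, h2]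
    abel
  set v : ℝ → ℝ := fun t => ‖x t - z t‖ with hvdef
  have hIciT : Icc τ t₁ ⊆ Ici (0:ℝ) := fun σ hσ => le_trans hτ0 hσ.1
  have hvc : ContinuousOn v (Icc τ t₁) := ((hxc.mono hIciT).sub hzc').norm
  have hvint : ∀ t ∈ Icc τ t₁, IntervalIntegrable v volume τ t := by
    intro t ht
    apply ContinuousOn.intervalIntegrable
    apply hvc.mono
    rw [uIcc_of_le ht.1]
    exact Icc_subset_Icc le_rfl ht.2
  have hkey : ∀ t ∈ Icc τ t₁, v t ≤ (v τ + c * r) + K * ∫ σ in τ..t, v σ := by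
    intro t ht
    have hGHint : IntervalIntegrable (fun σ => G σ - H σ) volume τ t :=
      (hGint τ t hτ0 ht.1).sub (hHint t ht)
    have h1 : v t ≤ v τ + ‖∫ σ in τ..t, (G σ - H σ)‖ := by
      rw [hvdef]
      simp only []
      rw [hweq t ht]
      exact norm_add_le _ _
    have h2 : ‖∫ σ in τ..t, (G σ - H σ)‖ ≤ ∫ σ in τ..t, ‖G σ - H σ‖ :=
      intervalIntegral.norm_integral_le_integral_norm ht.1
    have h3 : ∫ σ in τ..t, ‖G σ - H σ‖ ≤ ∫ σ in τ..t, (K * v σ + c) := by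
      apply intervalIntegral.integral_mono_on ht.1 hGHint.norm
      · apply ContinuousOn.intervalIntegrable
        apply ((continuousOn_const.mul hvc).add continuousOn_const).mono
        rw [uIcc_of_le ht.1]
        exact Icc_subset_Icc le_rfl ht.2
      intro σ hσ
      have hσ0 : 0 ≤ σ := le_trans hτ0 hσ.1
      have hsplit : G σ - H σ = A (y σ + e σ) (u σ) *ᵥ (x σ - z σ) +
          ((A (y σ) (u σ) - A (y σ + e σ) (u σ)) *ᵥ x σ +
            (b (y σ) (u σ) - b (y σ + e σ) (u σ))) := by
        rw [hGdef, hHdef]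
        simp only [Matrix.sub_mulVec, Matrix.mulVec_sub]
        abel
      calc ‖G σ - H σ‖ ≤ ‖A (y σ + e σ) (u σ) *ᵥ (x σ - z σ)‖ +
            ‖(A (y σ) (u σ) - A (y σ + e σ) (u σ)) *ᵥ x σ +
              (b (y σ) (u σ) - b (y σ + e σ) (u σ))‖ := by
            rw [hsplit]; exact norm_add_le _ _
        _ ≤ K * v σ + c := add_le_add (hAvec _ (hmem2 σ hσ0) _) (hpert σ hσ0)
    have h4 : ∫ σ in τ..t, (K * v σ + c) = K * (∫ σ in τ..t, v σ) + c * (t - τ) := by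
      rw [intervalIntegral.integral_add ((hvint t ht).const_mul K) intervalIntegrable_const,
        intervalIntegral.integral_const_mul, intervalIntegral.integral_const]
      rw [smul_eq_mul]
      ring
    have h5 : c * (t - τ) ≤ c * r := by
      apply mul_le_mul_of_nonneg_left _ hc0
      have := ht.2
      linarith
    have h6 := le_trans h2 h3
    rw [h4] at h6
    linarith
  have hA0' : 0 ≤ v τ + c * r := by
    have : 0 ≤ v τ := norm_nonneg _
    have : 0 ≤ c * r := mul_nonneg hc0 hr.le
    linarith
  have hgron := gronwall_int hτt₁.le hvc hA0' hK0' hkey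
  have hfinal : (v τ + c * r) * Real.exp (K * (t₁ - τ)) ≤
      (v τ + c * r) * Real.exp (r * K) := by
    apply mul_le_mul_of_nonneg_left _ hA0'
    apply Real.exp_le_exp.mpr
    have h1 : t₁ - τ ≤ r := by linarith
    calc K * (t₁ - τ) ≤ K * r := mul_le_mul_of_nonneg_left h1 hK0'
      _ = r * K := mul_comm _ _
  calc ‖x t₁ - z t₁‖ = v t₁ := rfl
    _ ≤ (v τ + c * r) * Real.exp (K * (t₁ - τ)) := hgron
    _ ≤ (v τ + c * r) * Real.exp (r * K) := hfinal
    _ = (‖x τ - z τ‖ + r * se * Rv) * Real.exp (r * K) := by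
        rw [hcdef, hvdef]; ring_nf
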